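/- Let k ≥ 1, n ≥ 1 be integers and for t ∈ ℝ let a_j(t) be the Fourier coefficients of e^{t/z}(1+z)^k. At every real t₀ with D_n(t₀) := det T_n(t₀) ≠ 0, the function t ↦ Ũ⁺_n(t) is differentiable and its derivative equals φ(t₀) := 1 − U⁻_n(t₀)·Ũ⁻_n(t₀), where Ũ⁺_n(t) and Ũ⁻_n(t) are the first and last components of (T_n(t)ᵀ)^{−1} ã⁺(t), and U⁻_n(t) is the last component of T_n(t)^{−1} a⁺(t). -/

import Mathlib

open scoped BigOperators
open Matrix

/-- The Fourier coefficients `a_j(t)` of the symbol `e^{t/z} (1+z)^k`. -/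
noncomputable def aCoeff (k : ℕ) (j : ℤ) (t : ℝ) : ℝ :=
  ∑' ℓ : ℕ, t ^ ℓ / (Nat.factorial ℓ : ℝ) *
    (if 0 ≤ j + (ℓ : ℤ) then (Nat.choose k (j + (ℓ : ℤ)).toNat : ℝ) else 0)

noncomputable def cc (k : ℕ) (j : ℤ) : ℝ :=
  if 0 ≤ j then (Nat.choose k j.toNat : ℝ) else 0

lemma cc_eq_zero (k : ℕ) (j : ℤ) (h : (k : ℤ) < j) : cc k j = 0 := by
  unfold cc
  split_ifs with h0
  · rw [Nat.choose_eq_zero_of_lt]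
    · norm_num
    · omega
  · rfl

lemma aCoeff_eq_sum (k : ℕ) (j : ℤ) (t : ℝ) (N : ℕ) (hN : k + 1 + j.natAbs ≤ N) :
    aCoeff k j t = ∑ ℓ ∈ Finset.range N, t ^ ℓ / (Nat.factorial ℓ : ℝ) * cc k (j + ℓ) := by
  unfold aCoeff cc
  apply tsum_eq_sum
  intro ℓ hℓ
  simp only [Finset.mem_range, not_lt] at hℓ
  have : (k : ℤ) < j + ℓ := by omega
  rw [if_pos (by omega), Nat.choose_eq_zero_of_lt (by omega)]
  norm_num

lemma aCoeff_hasDerivAt (k : ℕ) (j : ℤ) (t : ℝ) :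
    HasDerivAt (fun s => aCoeff k j s) (aCoeff k (j + 1) t) t := by
  set M : ℕ := k + 2 + j.natAbs with hM
  have key : HasDerivAt (fun s => ∑ ℓ ∈ Finset.range (M + 1),
      s ^ ℓ / (Nat.factorial ℓ : ℝ) * cc k (j + ℓ))
      (∑ ℓ ∈ Finset.range (M + 1),
        (ℓ : ℝ) * t ^ (ℓ - 1) / (Nat.factorial ℓ : ℝ) * cc k (j + ℓ)) t := by
    apply HasDerivAt.fun_sum
    intro ℓ _
    simpa [div_eq_mul_inv, mul_assoc, mul_comm, mul_left_comm] using
      ((hasDerivAt_pow ℓ t).mul_const ((Nat.factorial ℓ : ℝ)⁻¹ * cc k (j + ℓ)))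
  have e1 : (fun s => aCoeff k j s) = (fun s => ∑ ℓ ∈ Finset.range (M + 1),
      s ^ ℓ / (Nat.factorial ℓ : ℝ) * cc k (j + ℓ)) := by
    funext s
    exact aCoeff_eq_sum k j s (M + 1) (by omega)
  have e2 : (∑ ℓ ∈ Finset.range (M + 1),
      (ℓ : ℝ) * t ^ (ℓ - 1) / (Nat.factorial ℓ : ℝ) * cc k (j + ℓ)) = aCoeff k (j + 1) t := by
    rw [Finset.sum_range_succ' (fun ℓ => (ℓ : ℝ) * t ^ (ℓ - 1) / (Nat.factorial ℓ : ℝ) * cc k (j + ℓ)) M]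
    simp only [Nat.cast_zero, zero_mul, zero_div, zero_mul, add_zero]
    rw [aCoeff_eq_sum k (j + 1) t M (by omega)]
    apply Finset.sum_congr rfl
    intro m _
    have hfac : (Nat.factorial (m + 1) : ℝ) = (m + 1 : ℝ) * (Nat.factorial m : ℝ) := by
      rw [Nat.factorial_succ]; push_cast; ring
    have hcc : cc k (j + (m + 1 : ℕ)) = cc k (j + 1 + m) := by
      congr 1; push_cast; ring
    rw [hcc, hfac]
    have hm1 : ((m + 1 : ℕ) : ℝ) = (m : ℝ) + 1 := by push_cast; ring
    field_simp
    push_cast [Nat.add_sub_cancel_left]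
    ring
  rw [e1]
  rw [← e2]
  exact key

lemma differentiableAt_det {m : Type*} [Fintype m] [DecidableEq m]
    (A : ℝ → Matrix m m ℝ) (t : ℝ) (h : ∀ i j, DifferentiableAt ℝ (fun s => A s i j) t) :
    DifferentiableAt ℝ (fun s => (A s).det) t := by
  simp_rw [Matrix.det_apply']
  apply DifferentiableAt.fun_sum
  intro σ _
  apply DifferentiableAt.const_mul
  exact DifferentiableAt.fun_finsetProd (fun i _ => h (σ i) i)

lemma differentiableAt_adjugate {m : Type*} [Fintype m] [DecidableEq m]
    (A : ℝ → Matrix m m ℝ) (t : ℝ) (h : ∀ i j, DifferentiableAt ℝ (fun s => A s i j) t)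
    (i j : m) : DifferentiableAt ℝ (fun s => (A s).adjugate i j) t := by
  simp_rw [Matrix.adjugate_apply]
  apply differentiableAt_det
  intro p q
  simp_rw [Matrix.updateRow_apply]
  by_cases hp : p = j
  · simp [hp]
  · simpa [hp] using h p q

/-- The `n × n` Toeplitz matrix `T_n(t)` with `(i,j)` entry `a_{i-j}(t)`. -/
noncomputable def Tn (k n : ℕ) (t : ℝ) : Matrix (Fin n) (Fin n) ℝ :=
  Matrix.of fun i j : Fin n => aCoeff k (((i : ℕ) : ℤ) - ((j : ℕ) : ℤ)) t

/-- The vector `a⁺(t) = (a_1(t), …, a_n(t))`. -/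
noncomputable def aplus (k n : ℕ) (t : ℝ) : Fin n → ℝ :=
  fun i => aCoeff k (((i : ℕ) : ℤ) + 1) t

/-- The vector `ã⁺(t) = (a_{-1}(t), …, a_{-n}(t))`. -/
noncomputable def atplus (k n : ℕ) (t : ℝ) : Fin n → ℝ :=
  fun i => aCoeff k (-(((i : ℕ) : ℤ) + 1)) t

/-- Differentiation formula (3.26) of Tracy–Widom: at every `t₀` with
`det T_n(t₀) ≠ 0`, the function `Ũ⁺_n` is differentiable with derivative
`φ(t₀) = 1 - U⁻_n(t₀) Ũ⁻_n(t₀)`, where `Ũ⁺_n(t)` and `Ũ⁻_n(t)` are the first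
and last components of `(T_n(t)ᵀ)⁻¹ ã⁺(t)` and `U⁻_n(t)` is the last component
of `T_n(t)⁻¹ a⁺(t)`. -/
theorem deriv_Utilde_plus (k n : ℕ) (hk : 1 ≤ k) (hn : 1 ≤ n) (t₀ : ℝ)
    (ht : Matrix.det (Tn k n t₀) ≠ 0) :
    HasDerivAt (fun t => (((Tn k n t)ᵀ)⁻¹ *ᵥ atplus k n t) ⟨0, by omega⟩)
      (1 - ((Tn k n t₀)⁻¹ *ᵥ aplus k n t₀) ⟨n - 1, by omega⟩ *
        (((Tn k n t₀)ᵀ)⁻¹ *ᵥ atplus k n t₀) ⟨n - 1, by omega⟩) t₀ := by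
  -- entries of Tn are differentiable
  have hentry : ∀ (i j : Fin n) (t : ℝ),
      HasDerivAt (fun s => Tn k n s i j)
        (aCoeff k (((i : ℕ) : ℤ) - ((j : ℕ) : ℤ) + 1) t) t := by
    intro i j t
    simpa [Tn] using aCoeff_hasDerivAt k (((i : ℕ) : ℤ) - ((j : ℕ) : ℤ)) t
  have hentryT : ∀ (i j : Fin n) (t : ℝ),
      HasDerivAt (fun s => (Tn k n s)ᵀ i j)
        (aCoeff k (((j : ℕ) : ℤ) - ((i : ℕ) : ℤ) + 1) t) t := fun i j t => hentry j i t
  -- the vector function X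
  set X : ℝ → Fin n → ℝ := fun t => ((Tn k n t)ᵀ)⁻¹ *ᵥ atplus k n t with hX
  have hdetT : ∀ t, ((Tn k n t)ᵀ).det = (Tn k n t).det := fun t => Matrix.det_transpose _
  have hdetdiff : ∀ t, DifferentiableAt ℝ (fun s => ((Tn k n s)ᵀ).det) t := by
    intro t
    exact differentiableAt_det _ t (fun i j => (hentryT i j t).differentiableAt)
  -- differentiability of components of X
  have hXdiff : ∀ i : Fin n, DifferentiableAt ℝ (fun t => X t i) t₀ := by
    intro i
    have hXi : ∀ t, X t i = (((Tn k n t)ᵀ).det)⁻¹ *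
        ∑ j : Fin n, ((Tn k n t)ᵀ).adjugate i j * atplus k n t j := by
      intro t
      rw [hX]
      simp only [Matrix.inv_def, Ring.inverse_eq_inv', Matrix.smul_mulVec,
        Pi.smul_apply, smul_eq_mul]
      simp [Matrix.mulVec, dotProduct]
    simp_rw [hXi]
    apply DifferentiableAt.mul
    · exact (hdetdiff t₀).inv (by rw [hdetT]; exact ht)
    · apply DifferentiableAt.fun_sum
      intro j _
      exact (differentiableAt_adjugate _ t₀
        (fun p q => (hentryT p q t₀).differentiableAt) i j).mul
        (aCoeff_hasDerivAt k _ t₀).differentiableAt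
  set v : Fin n → ℝ := fun i => deriv (fun t => X t i) t₀ with hvdef
  have hv : ∀ i : Fin n, HasDerivAt (fun t => X t i) (v i) t₀ :=
    fun i => (hXdiff i).hasDerivAt
  -- eventually T^T *v X t = atplus
  have hdetcont : ContinuousAt (fun s => (Tn k n s).det) t₀ :=
    (differentiableAt_det (fun s => Tn k n s) t₀
      (fun i j => (hentry i j t₀).differentiableAt)).continuousAt
  have hev : ∀ᶠ t in nhds t₀, (Tn k n t).det ≠ 0 := hdetcont.eventually_ne ht
  have heq : ∀ᶠ t in nhds t₀, (Tn k n t)ᵀ *ᵥ X t = atplus k n t := by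
    filter_upwards [hev] with t hdet
    have hu : IsUnit ((Tn k n t)ᵀ).det := by
      rw [hdetT t]; exact isUnit_iff_ne_zero.mpr hdet
    rw [hX]
    rw [Matrix.mulVec_mulVec, Matrix.mul_nonsing_inv _ hu, Matrix.one_mulVec]
  -- derivative equations
  have hE : ∀ i : Fin n,
      (∑ j : Fin n, (aCoeff k (((j : ℕ) : ℤ) - ((i : ℕ) : ℤ) + 1) t₀ * X t₀ j
        + (Tn k n t₀)ᵀ i j * v j)) = aCoeff k (-((i : ℕ) : ℤ)) t₀ := by
    intro i
    have h1 : HasDerivAt (fun t => ∑ j : Fin n, (Tn k n t)ᵀ i j * X t j)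
        (∑ j : Fin n, (aCoeff k (((j : ℕ) : ℤ) - ((i : ℕ) : ℤ) + 1) t₀ * X t₀ j
          + (Tn k n t₀)ᵀ i j * v j)) t₀ :=
      HasDerivAt.fun_sum fun j _ => (hentryT i j t₀).mul (hv j)
    have h2 : (fun t => ∑ j : Fin n, (Tn k n t)ᵀ i j * X t j)
        =ᶠ[nhds t₀] (fun t => atplus k n t i) := by
      filter_upwards [heq] with t h
      calc ∑ j : Fin n, (Tn k n t)ᵀ i j * X t j = ((Tn k n t)ᵀ *ᵥ X t) i := by
            simp [Matrix.mulVec, dotProduct]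
        _ = atplus k n t i := by rw [h]
    have h3 : HasDerivAt (fun t => atplus k n t i)
        (∑ j : Fin n, (aCoeff k (((j : ℕ) : ℤ) - ((i : ℕ) : ℤ) + 1) t₀ * X t₀ j
          + (Tn k n t₀)ᵀ i j * v j)) t₀ := h2.hasDerivAt_iff.mp h1
    have h4 : HasDerivAt (fun t => atplus k n t i) (aCoeff k (-((i : ℕ) : ℤ)) t₀) t₀ := by
      simpa [atplus, show -(((i : ℕ) : ℤ) + 1) + 1 = -((i : ℕ) : ℤ) by ring]
        using aCoeff_hasDerivAt k (-(((i : ℕ) : ℤ) + 1)) t₀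
    exact h3.unique h4
  -- algebra at t₀
  set y : Fin n → ℝ := (Tn k n t₀)⁻¹ *ᵥ aplus k n t₀ with hydef
  have hu0 : IsUnit (Tn k n t₀).det := isUnit_iff_ne_zero.mpr ht
  have hTy : Tn k n t₀ *ᵥ y = aplus k n t₀ := by
    rw [hydef, Matrix.mulVec_mulVec, Matrix.mul_nonsing_inv _ hu0, Matrix.one_mulVec]
  set Xe : ℕ → ℝ := fun p => if hp : p < n then X t₀ ⟨p, hp⟩ else 0 with hXe
  set Ye : ℕ → ℝ := fun p => if hp : p < n then y ⟨p, hp⟩ else 0 with hYe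
  set w : Fin n → ℝ := fun jf => (if (jf : ℕ) = 0 then (1:ℝ) else 0)
    - (if (jf : ℕ) = 0 then 0 else Xe ((jf : ℕ) - 1))
    - Xe (n - 1) * Ye (n - 1 - (jf : ℕ)) with hwdef
  have hXeq : ∀ j : Fin n, X t₀ j = Xe (j : ℕ) := by
    intro j; simp only [hXe]; rw [dif_pos j.isLt]
  have hYeq : ∀ j : Fin n, y j = Ye (j : ℕ) := by
    intro j; simp only [hYe]; rw [dif_pos j.isLt]
  obtain ⟨m, rfl⟩ : ∃ m, n = m + 1 := ⟨n - 1, by omega⟩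
  have hW : ∀ i : Fin (m + 1), ∑ j : Fin (m + 1), (Tn k (m + 1) t₀)ᵀ i j * w j
      = aCoeff k (-((i : ℕ) : ℤ)) t₀
        - ∑ j : Fin (m + 1), aCoeff k (((j : ℕ) : ℤ) - ((i : ℕ) : ℤ) + 1) t₀ * X t₀ j := by
    intro i
    set I : ℤ := ((i : ℕ) : ℤ) with hI
    have hiLt : (i : ℕ) < m + 1 := i.isLt
    -- convert LHS to a range sum
    have hL : ∑ j : Fin (m + 1), (Tn k (m + 1) t₀)ᵀ i j * w j
        = ∑ p ∈ Finset.range (m + 1), (aCoeff k ((p : ℤ) - I) t₀ *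
            ((if p = 0 then (1:ℝ) else 0) - (if p = 0 then 0 else Xe (p - 1))
              - Xe m * Ye (m - p))) := by
      rw [← Fin.sum_univ_eq_sum_range]
      apply Finset.sum_congr rfl
      intro j _
      rw [hwdef]
      simp only [Tn, Matrix.transpose_apply, Matrix.of_apply]
      norm_num
      exact Or.inl rfl
    -- the three partial sums
    have hS1 : ∑ p ∈ Finset.range (m + 1),
        aCoeff k ((p : ℤ) - I) t₀ * (if p = 0 then (1:ℝ) else 0)
        = aCoeff k (-I) t₀ := by
      rw [Finset.sum_eq_single_of_mem 0 (Finset.mem_range.mpr (by omega))]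
      · norm_num
      · intro b _ hb
        rw [if_neg hb, mul_zero]
    have hS2 : ∑ p ∈ Finset.range (m + 1),
        aCoeff k ((p : ℤ) - I) t₀ * (if p = 0 then (0:ℝ) else Xe (p - 1))
        = (∑ p ∈ Finset.range (m + 1), aCoeff k ((p : ℤ) + 1 - I) t₀ * Xe p)
          - aCoeff k ((m : ℤ) + 1 - I) t₀ * Xe m := by
      have hstep : ∀ x ∈ Finset.range m,
          aCoeff k (((x + 1 : ℕ) : ℤ) - I) t₀ * (if x + 1 = 0 then (0:ℝ) else Xe (x + 1 - 1))
          = aCoeff k ((x : ℤ) + 1 - I) t₀ * Xe x := by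
        intro x _
        rw [if_neg (Nat.succ_ne_zero x), Nat.add_sub_cancel]
        norm_num
      rw [Finset.sum_range_succ' (fun p => aCoeff k ((p : ℤ) - I) t₀ *
        (if p = 0 then (0:ℝ) else Xe (p - 1))) m]
      rw [Finset.sum_congr rfl hstep]
      rw [if_pos rfl, mul_zero, add_zero]
      rw [Finset.sum_range_succ (fun p => aCoeff k ((p : ℤ) + 1 - I) t₀ * Xe p) m]
      ring
    have hS3 : ∑ p ∈ Finset.range (m + 1),
        aCoeff k ((p : ℤ) - I) t₀ * Ye (m - p)
        = aCoeff k ((m : ℤ) + 1 - I) t₀ := by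
      have hrefl := Finset.sum_range_reflect
        (fun p => aCoeff k (((m : ℤ) - (p : ℤ)) - I) t₀ * Ye p) (m + 1)
      have hL2 : ∑ p ∈ Finset.range (m + 1),
          aCoeff k ((p : ℤ) - I) t₀ * Ye (m - p)
          = ∑ p ∈ Finset.range (m + 1),
            aCoeff k (((m : ℤ) - ((m + 1 - 1 - p : ℕ) : ℤ)) - I) t₀ * Ye (m + 1 - 1 - p) := by
        apply Finset.sum_congr rfl
        intro p hp
        have hp' : p < m + 1 := Finset.mem_range.mp hp
        have h1 : (m + 1 - 1 - p : ℕ) = m - p := by omega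
        have h2 : (m : ℤ) - ((m - p : ℕ) : ℤ) - I = (p : ℤ) - I := by omega
        rw [h1, h2]
      rw [hL2, hrefl]
      -- now equals (T *v y) at index m - i
      have hq : (m : ℕ) - (i : ℕ) < m + 1 := by omega
      have hTyq := congrFun hTy ⟨m - (i : ℕ), hq⟩
      have hR2 : (Tn k (m + 1) t₀ *ᵥ y) ⟨m - (i : ℕ), hq⟩
          = ∑ p ∈ Finset.range (m + 1),
            aCoeff k (((m : ℤ) - (p : ℤ)) - I) t₀ * Ye p := by
        simp only [Matrix.mulVec, dotProduct, Tn, Matrix.of_apply]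
        rw [← Fin.sum_univ_eq_sum_range]
        apply Finset.sum_congr rfl
        intro j _
        rw [hYeq j]
        congr 2
        omega
      rw [← hR2, hTyq]
      simp only [aplus]
      congr 1
      omega
    -- assemble
    rw [hL]
    have hsplit : ∀ p ∈ Finset.range (m + 1),
        aCoeff k ((p : ℤ) - I) t₀ *
          ((if p = 0 then (1:ℝ) else 0) - (if p = 0 then 0 else Xe (p - 1))
            - Xe m * Ye (m - p))
        = aCoeff k ((p : ℤ) - I) t₀ * (if p = 0 then (1:ℝ) else 0)
          - aCoeff k ((p : ℤ) - I) t₀ * (if p = 0 then (0:ℝ) else Xe (p - 1))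
          - Xe m * (aCoeff k ((p : ℤ) - I) t₀ * Ye (m - p)) := by
      intro p _; ring
    rw [Finset.sum_congr rfl hsplit]
    rw [Finset.sum_sub_distrib, Finset.sum_sub_distrib, ← Finset.mul_sum]
    rw [hS1, hS2, hS3]
    have hRX : ∑ j : Fin (m + 1), aCoeff k (((j : ℕ) : ℤ) - I + 1) t₀ * X t₀ j
        = ∑ p ∈ Finset.range (m + 1), aCoeff k ((p : ℤ) + 1 - I) t₀ * Xe p := by
      rw [← Fin.sum_univ_eq_sum_range]
      apply Finset.sum_congr rfl
      intro j _
      rw [hXeq j]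
      congr 2
      ring
    rw [hRX]
    ring
  -- conclude v = w
  have hmv : ∀ (u : Fin (m + 1) → ℝ) (i : Fin (m + 1)),
      ((Tn k (m + 1) t₀)ᵀ *ᵥ u) i = ∑ j : Fin (m + 1), (Tn k (m + 1) t₀)ᵀ i j * u j := by
    intro u i; simp [Matrix.mulVec, dotProduct]
  have hvw : (Tn k (m + 1) t₀)ᵀ *ᵥ v = (Tn k (m + 1) t₀)ᵀ *ᵥ w := by
    funext i
    have h1 := hE i
    rw [Finset.sum_add_distrib] at h1
    rw [hmv v i, hmv w i, hW i]
    linarith [h1]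
  have huT : IsUnit ((Tn k (m + 1) t₀)ᵀ).det := by rw [hdetT]; exact hu0
  have hveqw : v = w := by
    have h6 := congrArg (fun u => ((Tn k (m + 1) t₀)ᵀ)⁻¹ *ᵥ u) hvw
    simp only [Matrix.mulVec_mulVec, Matrix.nonsing_inv_mul _ huT,
      Matrix.one_mulVec] at h6
    exact h6
  -- finish
  have h0lt : 0 < m + 1 := Nat.succ_pos m
  have hmlt : m < m + 1 := Nat.lt_succ_self m
  have hfinal := hv ⟨0, h0lt⟩
  have hv0 : v ⟨0, h0lt⟩
      = 1 - y ⟨m + 1 - 1, by omega⟩ * X t₀ ⟨m + 1 - 1, by omega⟩ := by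
    rw [hveqw, hwdef]
    simp only
    norm_num
    have hXm : Xe m = X t₀ ⟨m, hmlt⟩ := by
      simp only [hXe]; rw [dif_pos]
    have hYm : Ye m = y ⟨m, hmlt⟩ := by
      simp only [hYe]; rw [dif_pos]
    simp only [show m + 1 - 1 = m from rfl, show m - 0 = m from rfl, hXm, hYm]
    ring
  exact hv0 ▸ hfinal
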